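/- Let S be a finite set, E ⊆ FreeGroup(S) a finite subset with E ≠ ∅ and E ≠ {1}, and Γ = FreeGroup(S)/⟪E⟫. For a finite FreeGroup(S)-set Y, let L_E(Y) be its local defect and G_E(Y) = min{d_S(Y,Z) : Z a Γ-set with |Z| = |Y|} its global defect. Then L_E(Y) ≤ (Σ_{w∈E}|w|) · G_E(Y) for every finite FreeGroup(S)-set Y. -/

import Mathlib

open FreeGroup

private lemma aux14 {S Y : Type} [Finite S] [Fintype Y]
    (N : Subgroup (FreeGroup S)) [N.Normal]
    (ΦY : FreeGroup S →* Equiv.Perm Y)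
    (ρ : (FreeGroup S ⧸ N) →* Equiv.Perm Y) (g : Equiv.Perm Y) :
    ∀ L : List (S × Bool),
      Nat.card {y : Y // g (ΦY (FreeGroup.mk L) y)
          ≠ ρ (QuotientGroup.mk (FreeGroup.mk L)) (g y)}
        ≤ L.length * Nat.card {p : S × Y //
            g (ΦY (FreeGroup.of p.1) p.2)
              ≠ ρ (QuotientGroup.mk (FreeGroup.of p.1)) (g p.2)} := by
  classical
  intro L
  induction L with
  | nil =>
    have : IsEmpty {y : Y // g (ΦY (FreeGroup.mk ([] : List (S × Bool))) y)
        ≠ ρ (QuotientGroup.mk (FreeGroup.mk ([] : List (S × Bool)))) (g y)} := by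
      constructor
      rintro ⟨y, hy⟩
      apply hy
      rw [← one_eq_mk]
      simp
    simp [Nat.card_of_isEmpty]
  | cons a L ih =>
    obtain ⟨s, b⟩ := a
    have hsplit : FreeGroup.mk ((s, b) :: L) = FreeGroup.mk [(s, b)] * FreeGroup.mk L := by
      rw [mul_mk]; rfl
    set e : Equiv.Perm Y := (if b then 1 else (ΦY (FreeGroup.of s))⁻¹) * ΦY (FreeGroup.mk L)
      with he
    have key : ∀ y : Y, (g (ΦY (FreeGroup.mk ((s, b) :: L)) y)
          ≠ ρ (QuotientGroup.mk (FreeGroup.mk ((s, b) :: L))) (g y)) →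
        (g (ΦY (FreeGroup.mk L) y) = ρ (QuotientGroup.mk (FreeGroup.mk L)) (g y)) →
        g (ΦY (FreeGroup.of s) (e y))
          ≠ ρ (QuotientGroup.mk (FreeGroup.of s)) (g (e y)) := by
      intro y hy h
      rw [hsplit, _root_.map_mul, QuotientGroup.mk_mul, _root_.map_mul, Equiv.Perm.mul_apply, Equiv.Perm.mul_apply, ← h] at hy
      set x := ΦY (FreeGroup.mk L) y with hx
      cases b with
      | true =>
        have hof : FreeGroup.mk [(s, true)] = FreeGroup.of s := rfl
        rw [hof] at hy
        have hey : e y = x := by simp [he, hx]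
        rw [hey]
        exact hy
      | false =>
        have hof : FreeGroup.mk [(s, false)] = (FreeGroup.of s)⁻¹ := by
          rw [FreeGroup.of, inv_mk]
          simp [invRev]
        rw [hof, _root_.map_inv, QuotientGroup.mk_inv, _root_.map_inv] at hy
        have hey : e y = (ΦY (FreeGroup.of s))⁻¹ x := by simp [he, hx]
        rw [hey]
        intro hcon
        apply hy
        rw [← Equiv.Perm.mul_apply (ΦY (FreeGroup.of s)), mul_inv_cancel, Equiv.Perm.one_apply] at hcon
        rw [hcon]
        simp
    -- build the injection
    set f : {y : Y // g (ΦY (FreeGroup.mk ((s, b) :: L)) y)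
          ≠ ρ (QuotientGroup.mk (FreeGroup.mk ((s, b) :: L))) (g y)} →
        {y : Y // g (ΦY (FreeGroup.mk L) y)
          ≠ ρ (QuotientGroup.mk (FreeGroup.mk L)) (g y)} ⊕
        {p : S × Y // g (ΦY (FreeGroup.of p.1) p.2)
          ≠ ρ (QuotientGroup.mk (FreeGroup.of p.1)) (g p.2)} :=
      fun z => if h : g (ΦY (FreeGroup.mk L) z.1)
            ≠ ρ (QuotientGroup.mk (FreeGroup.mk L)) (g z.1)
        then Sum.inl ⟨z.1, h⟩
        else Sum.inr ⟨(s, e z.1), key z.1 z.2 (not_not.mp h)⟩ with hf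
    have hinj : Function.Injective f := by
      rintro ⟨y1, h1⟩ ⟨y2, h2⟩ hfe
      simp only [hf] at hfe
      split_ifs at hfe <;>
        first
        | (simp only [Sum.inl.injEq, Subtype.mk.injEq] at hfe
           exact Subtype.ext hfe)
        | (simp only [Sum.inr.injEq, Subtype.mk.injEq, Prod.mk.injEq, true_and] at hfe
           exact Subtype.ext (e.injective hfe))
        | simp at hfe
    have hcard := Nat.card_le_card_of_injective f hinj
    rw [Nat.card_sum] at hcard
    calc Nat.card {y : Y // g (ΦY (FreeGroup.mk ((s, b) :: L)) y)
          ≠ ρ (QuotientGroup.mk (FreeGroup.mk ((s, b) :: L))) (g y)}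
        ≤ Nat.card {y : Y // g (ΦY (FreeGroup.mk L) y)
              ≠ ρ (QuotientGroup.mk (FreeGroup.mk L)) (g y)}
            + Nat.card {p : S × Y // g (ΦY (FreeGroup.of p.1) p.2)
              ≠ ρ (QuotientGroup.mk (FreeGroup.of p.1)) (g p.2)} := hcard
      _ ≤ L.length * Nat.card {p : S × Y // g (ΦY (FreeGroup.of p.1) p.2)
              ≠ ρ (QuotientGroup.mk (FreeGroup.of p.1)) (g p.2)}
            + Nat.card {p : S × Y // g (ΦY (FreeGroup.of p.1) p.2)
              ≠ ρ (QuotientGroup.mk (FreeGroup.of p.1)) (g p.2)} :=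
          Nat.add_le_add_right ih _
      _ = ((s, b) :: L).length * Nat.card {p : S × Y // g (ΦY (FreeGroup.of p.1) p.2)
              ≠ ρ (QuotientGroup.mk (FreeGroup.of p.1)) (g p.2)} := by
          simp [List.length_cons, Nat.succ_mul]

theorem stmt14 {S Y : Type} [Fintype S] [DecidableEq S] [Fintype Y]
    (E : Finset (FreeGroup S)) (hE1 : E.Nonempty) (hE2 : E ≠ {1})
    (ΦY : FreeGroup S →* Equiv.Perm Y)
    (ρ : (FreeGroup S ⧸ Subgroup.normalClosure (E : Set (FreeGroup S))) →* Equiv.Perm Y)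
    (g : Equiv.Perm Y) :
    (∑ w ∈ E, (Nat.card {y : Y // ΦY w y ≠ y} : ℝ)) / Fintype.card Y ≤
      (∑ w ∈ E, ((FreeGroup.toWord w).length : ℝ)) *
        ((Nat.card {p : S × Y //
            g (ΦY (FreeGroup.of p.1) p.2)
              ≠ ρ (QuotientGroup.mk (FreeGroup.of p.1)) (g p.2)} : ℝ)
          / Fintype.card Y) := by
  classical
  set B := Nat.card {p : S × Y // g (ΦY (FreeGroup.of p.1) p.2)
      ≠ ρ (QuotientGroup.mk (FreeGroup.of p.1)) (g p.2)} with hB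
  have hw : ∀ w ∈ E, Nat.card {y : Y // ΦY w y ≠ y} ≤ (FreeGroup.toWord w).length * B := by
    intro w hwE
    have h1 : Nat.card {y : Y // ΦY w y ≠ y}
        = Nat.card {y : Y // g (ΦY (FreeGroup.mk (FreeGroup.toWord w)) y)
            ≠ ρ (QuotientGroup.mk (FreeGroup.mk (FreeGroup.toWord w))) (g y)} := by
      apply Nat.card_congr
      apply Equiv.subtypeEquivRight
      intro y
      have hρ : (QuotientGroup.mk w :
          FreeGroup S ⧸ Subgroup.normalClosure (E : Set (FreeGroup S))) = 1 := by
        rw [QuotientGroup.eq_one_iff]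
        exact Subgroup.subset_normalClosure hwE
      rw [mk_toWord, hρ, _root_.map_one]
      simp only [Equiv.Perm.one_apply]
      exact (g.injective.ne_iff).symm
    rw [h1]
    exact aux14 _ ΦY ρ g (FreeGroup.toWord w)
  rcases eq_or_ne (Fintype.card Y) 0 with hc | hc
  · simp [hc]
  · have hcpos : (0 : ℝ) < Fintype.card Y := by positivity
    rw [← mul_div_assoc, div_le_div_iff₀ hcpos hcpos]
    have hnum : (∑ w ∈ E, (Nat.card {y : Y // ΦY w y ≠ y} : ℝ))
        ≤ (∑ w ∈ E, ((FreeGroup.toWord w).length : ℝ)) * B := by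
      rw [Finset.sum_mul]
      apply Finset.sum_le_sum
      intro w hwE
      exact_mod_cast hw w hwE
    nlinarith [hnum, hcpos]
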